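/- Let m ≥ 3, k ≥ 2, and let E : (Fin m → Fin k) → Fin t satisfy the very-pliable decoding condition for receivers {1}, ..., {m} (receiver i knows only message i). Then t ≥ k² / (m+1), and consequently log t / log k ≥ 2 - log(m+1)/log k. -/

import Mathlib

open Finset


lemma pin_card {m k : ℕ} (S : Finset (Fin m → Fin k)) (P : Finset (Fin m))
    (g : Fin m → Fin k) (h : ∀ x ∈ S, ∀ i ∈ P, x i = g i) :
    S.card ≤ k ^ (m - P.card) := by
  classical
  have hle : S.card ≤ (Finset.univ : Finset ({i // i ∈ Pᶜ} → Fin k)).card := by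
    apply Finset.card_le_card_of_injOn (fun x => fun i => x i.1)
      (fun x _ => Finset.mem_univ _)
    intro x hx y hy hxy
    funext i
    by_cases hi : i ∈ P
    · rw [h x hx i hi, h y hy i hi]
    · exact congrFun hxy ⟨i, by simpa using hi⟩
  have hcard : (Finset.univ : Finset ({i // i ∈ Pᶜ} → Fin k)).card
      = k ^ (m - P.card) := by
    rw [Finset.card_univ, Fintype.card_fun]
    congr 1
    · simp
    · rw [Fintype.card_coe, Finset.card_compl, Fintype.card_fin]
  rw [hcard] at hle
  exact hle

lemma pin3_card {m k : ℕ} (S : Finset (Fin m → Fin k)) (p q r : Fin m)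
    (ap aq ar : Fin k) (hpq : p ≠ q) (hpr : p ≠ r) (hqr : q ≠ r)
    (h : ∀ x ∈ S, x p = ap ∧ x q = aq ∧ x r = ar) :
    S.card ≤ k ^ (m - 3) := by
  classical
  have hcard : ({p, q, r} : Finset (Fin m)).card = 3 := by
    rw [Finset.card_insert_of_notMem (by simp [hpq, hpr]),
      Finset.card_insert_of_notMem (by simp [hqr]), Finset.card_singleton]
  have := pin_card S {p, q, r}
    (fun i => if i = p then ap else if i = q then aq else ar) ?_
  · rwa [hcard] at this
  · intro x hx i hi
    obtain ⟨h1, h2, h3⟩ := h x hx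
    simp only [Finset.mem_insert, Finset.mem_singleton] at hi
    rcases hi with rfl | rfl | rfl
    · simpa using h1
    · simp only [if_neg (Ne.symm hpq), if_pos rfl]; exact h2
    · simp only [if_neg (Ne.symm hpr), if_neg (Ne.symm hqr)]; exact h3

lemma pin4_card {m k : ℕ} (S : Finset (Fin m → Fin k)) (p q r w : Fin m)
    (ap aq ar aw : Fin k) (hpq : p ≠ q) (hpr : p ≠ r) (hpw : p ≠ w)
    (hqr : q ≠ r) (hqw : q ≠ w) (hrw : r ≠ w)
    (h : ∀ x ∈ S, x p = ap ∧ x q = aq ∧ x r = ar ∧ x w = aw) :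
    S.card ≤ k ^ (m - 4) := by
  classical
  have hcard : ({p, q, r, w} : Finset (Fin m)).card = 4 := by
    rw [Finset.card_insert_of_notMem (by simp [hpq, hpr, hpw]),
      Finset.card_insert_of_notMem (by simp [hqr, hqw]),
      Finset.card_insert_of_notMem (by simp [hrw]), Finset.card_singleton]
  have := pin_card S {p, q, r, w}
    (fun i => if i = p then ap else if i = q then aq else if i = r then ar else aw) ?_
  · rwa [hcard] at this
  · intro x hx i hi
    obtain ⟨h1, h2, h3, h4⟩ := h x hx
    simp only [Finset.mem_insert, Finset.mem_singleton] at hi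
    rcases hi with rfl | rfl | rfl | rfl
    · simpa using h1
    · simp only [if_neg (Ne.symm hpq), if_pos rfl]; exact h2
    · simp only [if_neg (Ne.symm hpr), if_neg (Ne.symm hqr), if_pos rfl]; exact h3
    · simp only [if_neg (Ne.symm hpw), if_neg (Ne.symm hqw), if_neg (Ne.symm hrw)]; exact h4

lemma four_le {m : ℕ} (p q r w : Fin m) (hpq : p ≠ q) (hpr : p ≠ r) (hpw : p ≠ w)
    (hqr : q ≠ r) (hqw : q ≠ w) (hrw : r ≠ w) : 4 ≤ m := by
  classical
  have hcard : ({p, q, r, w} : Finset (Fin m)).card = 4 := by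
    rw [Finset.card_insert_of_notMem (by simp [hpq, hpr, hpw]),
      Finset.card_insert_of_notMem (by simp [hqr, hqw]),
      Finset.card_insert_of_notMem (by simp [hrw]), Finset.card_singleton]
  calc 4 = ({p, q, r, w} : Finset (Fin m)).card := hcard.symm
  _ ≤ (Finset.univ : Finset (Fin m)).card := Finset.card_le_card (Finset.subset_univ _)
  _ = m := by simp

section
variable {m k t : ℕ}

lemma fiber_bound (hm : 3 ≤ m) (E : (Fin m → Fin k) → Fin t)
    (J : Fin m → Fin k → Fin m) (V : Fin m → Fin k → Fin k) (c : Fin t)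
    (hJ : ∀ i a, J i a ≠ i)
    (hV : ∀ i a x, E x = c → x i = a → x (J i a) = V i a) :
    (Finset.univ.filter (fun x : Fin m → Fin k => E x = c)).card
      ≤ (m + 1) * k ^ (m - 2) := by
  classical
  set F := Finset.univ.filter (fun x : Fin m → Fin k => E x = c) with hF
  have hmem : ∀ x ∈ F, E x = c := fun x hx => (Finset.mem_filter.1 hx).2
  obtain ⟨i0⟩ : Nonempty (Fin m) := ⟨⟨0, by omega⟩⟩
  set T : Fin k → Finset (Fin m → Fin k) :=
    fun a => F.filter (fun x => x i0 = a) with hT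
  have hTmem : ∀ a, ∀ x ∈ T a, E x = c ∧ x i0 = a := by
    intro a x hx
    rw [hT] at hx
    exact ⟨hmem x (Finset.mem_of_mem_filter _ hx), (Finset.mem_filter.1 hx).2⟩
  set bad : Fin k → Prop :=
    fun a => J (J i0 a) (V i0 a) = i0 ∧ V (J i0 a) (V i0 a) = a with hbad
  -- bound on "good" slices
  have hgood : ∀ a : Fin k, ¬ bad a → (T a).card ≤ k ^ (m - 3) := by
    intro a hb
    by_cases h2 : J (J i0 a) (V i0 a) = i0
    · -- then the forced value differs from a, so the slice is empty
      have hv2 : V (J i0 a) (V i0 a) ≠ a := fun hc => hb ⟨h2, hc⟩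
      have : T a = ∅ := by
        apply Finset.eq_empty_of_forall_notMem
        intro x hx
        obtain ⟨hxc, hxi⟩ := hTmem a x hx
        have h1 := hV i0 a x hxc hxi
        have h2' := hV (J i0 a) (V i0 a) x hxc h1
        rw [h2] at h2'
        exact hv2 (h2'.symm.trans hxi)
      simp [this]
    · apply pin3_card (T a) i0 (J i0 a) (J (J i0 a) (V i0 a)) a (V i0 a)
        (V (J i0 a) (V i0 a)) (Ne.symm (hJ i0 a)) (Ne.symm h2)
        (Ne.symm (hJ (J i0 a) (V i0 a)))
      intro x hx
      obtain ⟨hxc, hxi⟩ := hTmem a x hx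
      have h1 := hV i0 a x hxc hxi
      exact ⟨hxi, h1, hV (J i0 a) (V i0 a) x hxc h1⟩
  -- bound on the bad slices grouped by pointer target j
  have hbadsum : ∀ j : Fin m,
      ∑ a ∈ (Finset.univ.filter bad).filter (fun a => J i0 a = j), (T a).card
        ≤ k ^ (m - 2) := by
    intro j
    set s := (Finset.univ.filter bad).filter (fun a => J i0 a = j) with hs
    have hsmem : ∀ a ∈ s, bad a ∧ J i0 a = j := by
      intro a ha
      rw [hs] at ha
      exact ⟨(Finset.mem_filter.1 (Finset.mem_of_mem_filter _ ha)).2,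
        (Finset.mem_filter.1 ha).2⟩
    by_cases hji : j = i0
    · have : s = ∅ := by
        apply Finset.eq_empty_of_forall_notMem
        intro a ha
        exact hJ i0 a ((hsmem a ha).2.trans hji)
      simp [this]
    · -- pick a third coordinate ℓ
      obtain ⟨ℓ, hℓ⟩ : (({i0, j} : Finset (Fin m))ᶜ).Nonempty := by
        rw [← Finset.card_pos, Finset.card_compl]
        have h2 : ({i0, j} : Finset (Fin m)).card ≤ 2 :=
          (Finset.card_insert_le _ _).trans (by simp)
        have := Finset.card_univ (α := Fin m)
        simp only [Fintype.card_fin]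
        omega
      simp only [Finset.mem_compl, Finset.mem_insert, Finset.mem_singleton, not_or] at hℓ
      obtain ⟨hℓ0, hℓj⟩ := hℓ
      -- facts for x in a bad slice
      have hx4 : ∀ a ∈ s, ∀ b : Fin k,
          ∀ x ∈ (T a).filter (fun x => x ℓ = b),
          E x = c ∧ x i0 = a ∧ x j = V i0 a ∧ x ℓ = b ∧ x (J ℓ b) = V ℓ b := by
        intro a ha b x hx
        obtain ⟨hxc, hxi⟩ := hTmem a x (Finset.mem_of_mem_filter _ hx)
        have hxl : x ℓ = b := (Finset.mem_filter.1 hx).2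
        have hxj : x j = V i0 a := by
          rw [← (hsmem a ha).2]; exact hV i0 a x hxc hxi
        exact ⟨hxc, hxi, hxj, hxl, hV ℓ b x hxc hxl⟩
      -- inner bound for each value b of coordinate ℓ
      have inner : ∀ b : Fin k,
          ∑ a ∈ s, ((T a).filter (fun x => x ℓ = b)).card ≤ k ^ (m - 3) := by
        intro b
        by_cases h1 : J ℓ b = i0
        · -- pointer to i0 forces a unique a = V ℓ b
          calc ∑ a ∈ s, ((T a).filter (fun x => x ℓ = b)).card
              ≤ ∑ a ∈ s, (if a = V ℓ b then k ^ (m - 3) else 0) := by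
                apply Finset.sum_le_sum
                intro a ha
                by_cases hav : a = V ℓ b
                · rw [if_pos hav]
                  apply pin3_card _ i0 j ℓ a (V i0 a) b (Ne.symm hji) (Ne.symm hℓ0) (Ne.symm hℓj)
                  intro x hx
                  obtain ⟨_, h₂, h₃, h₄, _⟩ := hx4 a ha b x hx
                  exact ⟨h₂, h₃, h₄⟩
                · rw [if_neg hav]
                  have : (T a).filter (fun x => x ℓ = b) = ∅ := by
                    apply Finset.eq_empty_of_forall_notMem
                    intro x hx
                    obtain ⟨_, h₂, _, _, h₅⟩ := hx4 a ha b x hx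
                    rw [h1] at h₅
                    exact hav (h₂ ▸ h₅ ▸ rfl)
                  simp [this]
            _ ≤ ∑ a : Fin k, (if a = V ℓ b then k ^ (m - 3) else 0) :=
                Finset.sum_le_sum_of_subset (Finset.subset_univ s)
            _ = k ^ (m - 3) := by simp
        · by_cases h2 : J ℓ b = j
          · -- pointer to j forces a unique a = V j (V ℓ b)
            calc ∑ a ∈ s, ((T a).filter (fun x => x ℓ = b)).card
                ≤ ∑ a ∈ s, (if a = V j (V ℓ b) then k ^ (m - 3) else 0) := by
                  apply Finset.sum_le_sum
                  intro a ha
                  by_cases hav : a = V j (V ℓ b)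
                  · rw [if_pos hav]
                    apply pin3_card _ i0 j ℓ a (V i0 a) b (Ne.symm hji) (Ne.symm hℓ0) (Ne.symm hℓj)
                    intro x hx
                    obtain ⟨_, h₂, h₃, h₄, _⟩ := hx4 a ha b x hx
                    exact ⟨h₂, h₃, h₄⟩
                  · rw [if_neg hav]
                    have : (T a).filter (fun x => x ℓ = b) = ∅ := by
                      apply Finset.eq_empty_of_forall_notMem
                      intro x hx
                      obtain ⟨_, _, h₃, _, h₅⟩ := hx4 a ha b x hx
                      rw [h2] at h₅
                      have hveq : V i0 a = V ℓ b := by rw [← h₃, h₅]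
                      obtain ⟨hbd, hjj⟩ := hsmem a ha
                      obtain ⟨_, hb2⟩ := hbd
                      rw [hjj] at hb2
                      exact hav (by rw [← hveq, hb2])
                    simp [this]
              _ ≤ ∑ a : Fin k, (if a = V j (V ℓ b) then k ^ (m - 3) else 0) :=
                  Finset.sum_le_sum_of_subset (Finset.subset_univ s)
              _ = k ^ (m - 3) := by simp
          · -- four distinct pinned coordinates
            have hm4 : 4 ≤ m := four_le i0 j ℓ (J ℓ b) (Ne.symm hji) (Ne.symm hℓ0)
              (Ne.symm h1) (Ne.symm hℓj) (Ne.symm h2) (Ne.symm (hJ ℓ b))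
            calc ∑ a ∈ s, ((T a).filter (fun x => x ℓ = b)).card
                ≤ ∑ _a ∈ s, k ^ (m - 4) := by
                  apply Finset.sum_le_sum
                  intro a ha
                  apply pin4_card _ i0 j ℓ (J ℓ b) a (V i0 a) b (V ℓ b)
                    (Ne.symm hji) (Ne.symm hℓ0) (Ne.symm h1) (Ne.symm hℓj) (Ne.symm h2)
                    (Ne.symm (hJ ℓ b))
                  intro x hx
                  obtain ⟨_, h₂, h₃, h₄, h₅⟩ := hx4 a ha b x hx
                  exact ⟨h₂, h₃, h₄, h₅⟩
              _ = s.card * k ^ (m - 4) := by rw [Finset.sum_const, smul_eq_mul]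
              _ ≤ k * k ^ (m - 4) := by
                  apply Nat.mul_le_mul_right
                  calc s.card ≤ (Finset.univ : Finset (Fin k)).card :=
                        Finset.card_le_card (Finset.subset_univ s)
                    _ = k := by simp
              _ = k ^ (m - 3) := by
                  rw [← pow_succ']
                  congr 1
                  omega
      -- slice each T a along coordinate ℓ and sum
      calc ∑ a ∈ s, (T a).card
          = ∑ a ∈ s, ∑ b : Fin k, ((T a).filter (fun x => x ℓ = b)).card := by
            apply Finset.sum_congr rfl
            intro a _
            exact Finset.card_eq_sum_card_fiberwise (fun x _ => Finset.mem_univ _)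
        _ = ∑ b : Fin k, ∑ a ∈ s, ((T a).filter (fun x => x ℓ = b)).card :=
            Finset.sum_comm
        _ ≤ ∑ _b : Fin k, k ^ (m - 3) := Finset.sum_le_sum (fun b _ => inner b)
        _ = k * k ^ (m - 3) := by rw [Finset.sum_const, smul_eq_mul, Finset.card_univ,
            Fintype.card_fin]
        _ = k ^ (m - 2) := by
            rw [← pow_succ']
            congr 1
            omega
  -- assemble
  have hsplit : F.card = ∑ a : Fin k, (T a).card :=
    Finset.card_eq_sum_card_fiberwise (fun x _ => Finset.mem_univ (x i0))
  have hbadtotal : ∑ a ∈ Finset.univ.filter bad, (T a).card ≤ m * k ^ (m - 2) := by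
    rw [← Finset.sum_fiberwise_of_maps_to (g := fun a => J i0 a)
      (fun a _ => Finset.mem_univ _) (fun a => (T a).card)]
    calc ∑ j : Fin m, ∑ a ∈ (Finset.univ.filter bad).filter (fun a => J i0 a = j),
          (T a).card
        ≤ ∑ _j : Fin m, k ^ (m - 2) := Finset.sum_le_sum (fun j _ => hbadsum j)
      _ = m * k ^ (m - 2) := by
          rw [Finset.sum_const, smul_eq_mul, Finset.card_univ, Fintype.card_fin]
  have hgoodtotal : ∑ a ∈ Finset.univ.filter (fun a => ¬ bad a), (T a).card
      ≤ k ^ (m - 2) := by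
    calc ∑ a ∈ Finset.univ.filter (fun a => ¬ bad a), (T a).card
        ≤ ∑ _a ∈ Finset.univ.filter (fun a => ¬ bad a), k ^ (m - 3) :=
          Finset.sum_le_sum (fun a ha => hgood a (Finset.mem_filter.1 ha).2)
      _ = (Finset.univ.filter (fun a => ¬ bad a)).card * k ^ (m - 3) := by
          rw [Finset.sum_const, smul_eq_mul]
      _ ≤ k * k ^ (m - 3) := by
          apply Nat.mul_le_mul_right
          calc (Finset.univ.filter (fun a => ¬ bad a)).card
              ≤ (Finset.univ : Finset (Fin k)).card :=
                Finset.card_le_card (Finset.filter_subset _ _)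
            _ = k := by simp
      _ = k ^ (m - 2) := by
          rw [← pow_succ']
          congr 1
          omega
  calc F.card = ∑ a : Fin k, (T a).card := hsplit
    _ = ∑ a ∈ Finset.univ.filter bad, (T a).card
        + ∑ a ∈ Finset.univ.filter (fun a => ¬ bad a), (T a).card :=
        (Finset.sum_filter_add_sum_filter_not _ _ _).symm
    _ ≤ m * k ^ (m - 2) + k ^ (m - 2) := add_le_add hbadtotal hgoodtotal
    _ = (m + 1) * k ^ (m - 2) := by ring

end

theorem stmt_9 (m k t : ℕ) (hm : 3 ≤ m) (hk : 2 ≤ k)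
    (E : (Fin m → Fin k) → Fin t)
    (hvp : ∀ (i : Fin m) (c : Fin t) (a : Fin k),
      ∃ j ≠ i, ∃ v : Fin k, ∀ x : Fin m → Fin k, E x = c → x i = a → x j = v) :
    k ^ 2 ≤ (m + 1) * t ∧
      2 - Real.log ((m : ℝ) + 1) / Real.log (k : ℝ) ≤ Real.log (t : ℝ) / Real.log (k : ℝ) := by
  classical
  choose J hJ V hV using hvp
  have fiber : ∀ c : Fin t,
      (Finset.univ.filter (fun x : Fin m → Fin k => E x = c)).card
        ≤ (m + 1) * k ^ (m - 2) :=
    fun c => fiber_bound hm E (fun i a => J i c a) (fun i a => V i c a) c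
      (fun i a => hJ i c a) (fun i a x => hV i c a x)
  have htotal : k ^ m ≤ t * ((m + 1) * k ^ (m - 2)) := by
    have h1 : (Finset.univ : Finset (Fin m → Fin k)).card
        = ∑ c : Fin t, (Finset.univ.filter (fun x : Fin m → Fin k => E x = c)).card :=
      Finset.card_eq_sum_card_fiberwise (fun x _ => Finset.mem_univ (E x))
    have h2 : (Finset.univ : Finset (Fin m → Fin k)).card = k ^ m := by
      rw [Finset.card_univ, Fintype.card_fun, Fintype.card_fin, Fintype.card_fin]
    calc k ^ m = ∑ c : Fin t, (Finset.univ.filter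
          (fun x : Fin m → Fin k => E x = c)).card := by rw [← h1, h2]
      _ ≤ ∑ _c : Fin t, (m + 1) * k ^ (m - 2) :=
          Finset.sum_le_sum (fun c _ => fiber c)
      _ = t * ((m + 1) * k ^ (m - 2)) := by
          rw [Finset.sum_const, smul_eq_mul, Finset.card_univ, Fintype.card_fin]
  have hk2 : k ^ 2 ≤ (m + 1) * t := by
    have hpow : k ^ 2 * k ^ (m - 2) = k ^ m := by
      rw [← pow_add]
      congr 1
      omega
    have hposp : 0 < k ^ (m - 2) := Nat.pow_pos (by omega)
    have : k ^ 2 * k ^ (m - 2) ≤ ((m + 1) * t) * k ^ (m - 2) := by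
      rw [hpow]
      calc k ^ m ≤ t * ((m + 1) * k ^ (m - 2)) := htotal
        _ = ((m + 1) * t) * k ^ (m - 2) := by ring
    exact Nat.le_of_mul_le_mul_right this hposp
  refine ⟨hk2, ?_⟩
  have ht : 0 < t := by
    rcases Nat.eq_zero_or_pos t with h | h
    · subst h
      simp at hk2
      have : 0 < k ^ 2 := Nat.pow_pos (by omega)
      omega
    · exact h
  have hL : 0 < Real.log (k : ℝ) := Real.log_pos (by exact_mod_cast hk)
  have hcast : ((k : ℝ)) ^ 2 ≤ ((m : ℝ) + 1) * (t : ℝ) := by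
    have := hk2
    push_cast
    exact_mod_cast this
  have hlog : 2 * Real.log (k : ℝ) ≤ Real.log ((m : ℝ) + 1) + Real.log (t : ℝ) := by
    have hkpos : (0 : ℝ) < (k : ℝ) ^ 2 := by positivity
    have h1 : Real.log ((k : ℝ) ^ 2) ≤ Real.log (((m : ℝ) + 1) * (t : ℝ)) :=
      Real.log_le_log hkpos hcast
    rw [Real.log_pow, Real.log_mul (by positivity) (by
      have : (1 : ℝ) ≤ (t : ℝ) := by exact_mod_cast ht
      linarith)] at h1
    push_cast at h1 ⊢
    linarith
  rw [sub_le_iff_le_add, ← add_div, le_div_iff₀ hL]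
  linarith
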